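/- Let K be a field, and let q, u, v, x, y ∈ K be units with q⁴ ≠ 1, xy ≠ 1, x⁻¹y ≠ 1. Suppose x + x⁻¹ = 2(qu + q⁻¹u⁻¹)/(q + q⁻¹) and y + y⁻¹ = 2(qv + q⁻¹v⁻¹)/(q + q⁻¹). Then x⁻¹y/(x⁻¹y − 1)² + xy/(xy − 1)² = 1/(q − q⁻¹)² holds if and only if at least one of the following four equations holds: v = q²u, v = q⁻²u, v = u⁻¹, or v = q⁻⁴u⁻¹. -/

import Mathlib

theorem stmt_3 (K : Type*) [Field K] (h2 : (2 : K) ≠ 0)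
    (q u v x y : K) (hq : q ≠ 0) (hu : u ≠ 0) (hv : v ≠ 0) (hx : x ≠ 0) (hy : y ≠ 0)
    (hq4 : q ^ 4 ≠ 1) (hxy : x * y ≠ 1) (hxy' : x⁻¹ * y ≠ 1)
    (hxu : x + x⁻¹ = 2 * (q * u + q⁻¹ * u⁻¹) / (q + q⁻¹))
    (hyv : y + y⁻¹ = 2 * (q * v + q⁻¹ * v⁻¹) / (q + q⁻¹)) :
    x⁻¹ * y / (x⁻¹ * y - 1) ^ 2 + x * y / (x * y - 1) ^ 2 = 1 / (q - q⁻¹) ^ 2 ↔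
      v = q ^ 2 * u ∨ v = (q⁻¹) ^ 2 * u ∨ v = u⁻¹ ∨ v = (q⁻¹) ^ 4 * u⁻¹ := by
  have hqq : q * q - 1 ≠ 0 := fun h => hq4 (by linear_combination (q * q + 1) * h)
  have hqq' : q * q + 1 ≠ 0 := fun h => hq4 (by linear_combination (q * q - 1) * h)
  have hyx : y - x ≠ 0 := by
    intro h
    apply hxy'
    have : y = x := by linear_combination h
    rw [this]
    exact inv_mul_cancel₀ hx
  have hA : x⁻¹ * y - 1 ≠ 0 := sub_ne_zero.mpr hxy'
  have hB : x * y - 1 ≠ 0 := sub_ne_zero.mpr hxy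
  have h4 : (-4 : K) ≠ 0 := by
    intro h
    apply h2
    have : (2 : K) * 2 = 0 := by linear_combination -h
    rcases mul_eq_zero.mp this with h' | h' <;> exact h'
  have hq2 : q ^ 2 - 1 ≠ 0 := by rw [sq]; exact hqq
  have hq2' : q ^ 2 + 1 ≠ 0 := by rw [sq]; exact hqq'
  have key1 : x⁻¹ * y / (x⁻¹ * y - 1) ^ 2 + x * y / (x * y - 1) ^ 2 = 1 / (q - q⁻¹) ^ 2 ↔
      (q - q⁻¹) ^ 2 * ((x + x⁻¹) * (y + y⁻¹) - 4) = ((x + x⁻¹) - (y + y⁻¹)) ^ 2 := by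
    constructor <;> intro h
    · field_simp at h ⊢
      linear_combination h
    · field_simp at h ⊢
      apply mul_left_cancel₀ hy
      linear_combination y * h
  rw [key1, hxu, hyv]
  have nz : q ^ 2 * (q * u * (q * q + 1) * (q * v * (q * q + 1))) ≠ 0 :=
    mul_ne_zero (pow_ne_zero 2 hq)
      (mul_ne_zero (mul_ne_zero (mul_ne_zero hq hu) hqq') (mul_ne_zero (mul_ne_zero hq hv) hqq'))
  have hc : (-4 : K) * q ^ 6 * u * v * (q * q + 1) ^ 4 ≠ 0 :=
    mul_ne_zero (mul_ne_zero (mul_ne_zero (mul_ne_zero h4 (pow_ne_zero 6 hq)) hu) hv)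
      (pow_ne_zero 4 hqq')
  have key2 : (q - q⁻¹) ^ 2 *
        (2 * (q * u + q⁻¹ * u⁻¹) / (q + q⁻¹) * (2 * (q * v + q⁻¹ * v⁻¹) / (q + q⁻¹)) - 4) =
        (2 * (q * u + q⁻¹ * u⁻¹) / (q + q⁻¹) - 2 * (q * v + q⁻¹ * v⁻¹) / (q + q⁻¹)) ^ 2 ↔
      (v - q ^ 2 * u) * (q ^ 2 * v - u) * (u * v - 1) * (q ^ 4 * u * v - 1) = 0 := by
    constructor <;> intro h
    · field_simp at h
      have h5 : (-4 : K) * q ^ 6 * u * v * (q * q + 1) ^ 4 *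
          ((v - q ^ 2 * u) * (q ^ 2 * v - u) * (u * v - 1) * (q ^ 4 * u * v - 1)) = 0 := by
        linear_combination (q ^ 6 * u * v * (q * q + 1) ^ 4) * h
      exact (mul_eq_zero.mp h5).resolve_left hc
    · field_simp
      linear_combination (-4 : K) * h
  rw [key2]
  constructor
  · intro h
    rcases mul_eq_zero.mp h with h' | h'
    · rcases mul_eq_zero.mp h' with h'' | h''
      · rcases mul_eq_zero.mp h'' with h3 | h3
        · exact Or.inl (by linear_combination h3)
        · refine Or.inr (Or.inl ?_)
          field_simp
          linear_combination h3
      · refine Or.inr (Or.inr (Or.inl ?_))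
        field_simp
        linear_combination h''
    · refine Or.inr (Or.inr (Or.inr ?_))
      field_simp
      linear_combination h'
  · rintro (h | h | h | h)
    · rw [h]; ring
    · rw [h]; field_simp; ring
    · rw [h]; field_simp; ring
    · rw [h]; field_simp; ring
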